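/- Let α, β, δ, γ > 0 be real numbers satisfying: β > 1/2; δ > max{ β(1−β)/3 + γα, (1−γ)²/12 + γα, 1/12 }; and δ > (1/2)·max{ (2−2β)²/4 + (2β−1)γ, β²/4 + (1−β)γ }. Let H be an n-vertex {K4^{3-}, F5}-free 3-graph with independence number α(H) ≤ αn and minimum degree δ(H) > δn², and suppose H contains three pairwise disjoint independent sets U1, U2, U3 ⊆ V(H) such that |Ui| + |Uj| > βn for every pair i < j from {1,2,3}, and |U1| + |U2| + |U3| > (1−γ)n. Then H is 3-partite. -/

import Mathlib

open Finset

section Defs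

variable {V : Type*} [DecidableEq V]

/-- The degree of a vertex `v` in the 3-graph `H`: the number of edges containing `v`. -/
def degH (H : Finset (Finset V)) (v : V) : ℕ :=
  (H.filter fun e => v ∈ e).card

/-- `H` contains a copy of the generalized triangle `F₅ = {abc, abd, cde}`. -/
def HasF5 (H : Finset (Finset V)) : Prop :=
  ∃ a b c d e : V,
    a ≠ b ∧ a ≠ c ∧ a ≠ d ∧ a ≠ e ∧ b ≠ c ∧ b ≠ d ∧ b ≠ e ∧ c ≠ d ∧ c ≠ e ∧ d ≠ e ∧
    ({a, b, c} : Finset V) ∈ H ∧ ({a, b, d} : Finset V) ∈ H ∧ ({c, d, e} : Finset V) ∈ H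

/-- `H` contains a copy of `K₄³⁻ = {abc, abd, acd}`. -/
def HasK43m (H : Finset (Finset V)) : Prop :=
  ∃ a b c d : V,
    a ≠ b ∧ a ≠ c ∧ a ≠ d ∧ b ≠ c ∧ b ≠ d ∧ c ≠ d ∧
    ({a, b, c} : Finset V) ∈ H ∧ ({a, b, d} : Finset V) ∈ H ∧ ({a, c, d} : Finset V) ∈ H

/-- `H` is 3-partite: the vertex set can be partitioned into three parts so that every
edge has at most one vertex in each part. -/
def Tripartite (H : Finset (Finset V)) : Prop :=
  ∃ P : V → Fin 3, ∀ e ∈ H, ∀ u ∈ e, ∀ v ∈ e, u ≠ v → P u ≠ P v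

/-- The shadow graph `∂H` of the 3-graph `H`: two distinct vertices are adjacent iff
they lie in a common edge of `H`. -/
def shadowG (H : Finset (Finset V)) : SimpleGraph V where
  Adj u v := u ≠ v ∧ ∃ e ∈ H, u ∈ e ∧ v ∈ e
  symm := by
    constructor
    rintro u v ⟨hne, e, he, hu, hv⟩
    exact ⟨hne.symm, e, he, hv, hu⟩
  loopless := by constructor; rintro u ⟨hne, -⟩; exact hne rfl

end Defs

/-- A set `I` is independent in the 3-graph `H` if every edge meets it in at most one
vertex. -/
def IsIndep {V : Type*} [DecidableEq V] (H : Finset (Finset V)) (I : Finset V) : Prop :=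
  ∀ e ∈ H, (e ∩ I).card ≤ 1

set_option linter.unusedSectionVars false

section AuxLink

variable {V : Type*} [DecidableEq V]

/-- The link of a vertex, as a set of pairs. -/
def linkv (H : Finset (Finset V)) (v : V) : Finset (Finset V) :=
  (H.filter fun e => v ∈ e).image fun e => e.erase v

lemma card_linkv {H : Finset (Finset V)} (v : V) : (linkv H v).card = degH H v := by
  unfold linkv degH
  apply Finset.card_image_of_injOn
  intro e he f hf hef
  simp only [coe_filter, Set.mem_setOf_eq] at he hf
  dsimp only at hef
  rw [← Finset.insert_erase he.2, hef, Finset.insert_erase hf.2]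

variable {H : Finset (Finset V)}

lemma mem_linkv_iff (h3 : ∀ e ∈ H, e.card = 3) {v : V} {s : Finset V} :
    s ∈ linkv H v ↔ s.card = 2 ∧ v ∉ s ∧ insert v s ∈ H := by
  constructor
  · intro hs
    simp only [linkv, mem_image, mem_filter] at hs
    obtain ⟨e, ⟨he, hv⟩, rfl⟩ := hs
    refine ⟨?_, notMem_erase _ _, ?_⟩
    · rw [Finset.card_erase_of_mem hv, h3 e he]
    · rw [Finset.insert_erase hv]; exact he
  · rintro ⟨hcard, hv, hins⟩
    simp only [linkv, mem_image, mem_filter]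
    exact ⟨insert v s, ⟨hins, mem_insert_self _ _⟩, by rw [Finset.erase_insert hv]⟩

lemma nonadj_of_common (h3 : ∀ e ∈ H, e.card = 3) (hK : ¬ HasK43m H) (hF5 : ¬ HasF5 H)
    {s : Finset V} {p q : V} (hs : s.card = 2) (hp : p ∉ s) (hq : q ∉ s) (hpq : p ≠ q)
    (h1 : insert p s ∈ H) (h2 : insert q s ∈ H) :
    ∀ g ∈ H, ¬ (p ∈ g ∧ q ∈ g) := by
  obtain ⟨x, y, hxy, rfl⟩ := Finset.card_eq_two.mp hs
  have hpx : p ≠ x := fun h => hp (by simp [h])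
  have hpy : p ≠ y := fun h => hp (by simp [h])
  have hqx : q ≠ x := fun h => hq (by simp [h])
  have hqy : q ≠ y := fun h => hq (by simp [h])
  have he1 : ({x, y, p} : Finset V) ∈ H := by
    have hh : ({x, y, p} : Finset V) = insert p {x, y} := by ext t; simp; tauto
    rw [hh]; exact h1
  have he2 : ({x, y, q} : Finset V) ∈ H := by
    have hh : ({x, y, q} : Finset V) = insert q {x, y} := by ext t; simp; tauto
    rw [hh]; exact h2
  rintro g hg ⟨hpg, hqg⟩
  have hgc : g.card = 3 := h3 g hg
  have hcard' : ((g.erase q).erase p).card = 1 := by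
    rw [Finset.card_erase_of_mem (Finset.mem_erase.mpr ⟨hpq, hpg⟩),
      Finset.card_erase_of_mem hqg, hgc]
  obtain ⟨z, hz⟩ := Finset.card_eq_one.mp hcard'
  have hzmem : z ∈ (g.erase q).erase p := by rw [hz]; exact mem_singleton_self z
  have hzp : z ≠ p := (Finset.mem_erase.mp hzmem).1
  have hzq : z ≠ q := (Finset.mem_erase.mp (Finset.mem_of_mem_erase hzmem)).1
  have hzg : z ∈ g := Finset.mem_of_mem_erase (Finset.mem_of_mem_erase hzmem)
  have hc3 : ({p, q, z} : Finset V).card = 3 := by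
    rw [Finset.card_insert_of_notMem (by simp [hpq, Ne.symm hzp]),
      Finset.card_insert_of_notMem (by simp [Ne.symm hzq]), Finset.card_singleton]
  have hgeq : ({p, q, z} : Finset V) = g := by
    apply Finset.eq_of_subset_of_card_le
    · intro t ht
      simp only [Finset.mem_insert, Finset.mem_singleton] at ht
      rcases ht with rfl | rfl | rfl <;> assumption
    · rw [hgc, hc3]
  by_cases hzx : z = x
  · subst hzx
    exact hK ⟨z, y, p, q, hxy, Ne.symm hpx, Ne.symm hqx, Ne.symm hpy, Ne.symm hqy, hpq,
      he1, he2, by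
        have hh : ({z, p, q} : Finset V) = {p, q, z} := by ext t; simp; tauto
        rw [hh, hgeq]; exact hg⟩
  · by_cases hzy : z = y
    · subst hzy
      have he1' : ({z, x, p} : Finset V) ∈ H := by
        have hh : ({z, x, p} : Finset V) = {x, z, p} := by ext t; simp; tauto
        rw [hh]; exact he1
      have he2' : ({z, x, q} : Finset V) ∈ H := by
        have hh : ({z, x, q} : Finset V) = {x, z, q} := by ext t; simp; tauto
        rw [hh]; exact he2
      exact hK ⟨z, x, p, q, Ne.symm hxy, Ne.symm hpy, Ne.symm hqy, Ne.symm hpx, Ne.symm hqx,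
        hpq, he1', he2', by
          have hh : ({z, p, q} : Finset V) = {p, q, z} := by ext t; simp; tauto
          rw [hh, hgeq]; exact hg⟩
    · exact hF5 ⟨x, y, p, q, z, hxy, Ne.symm hpx, Ne.symm hqx, fun h => hzx h.symm,
        Ne.symm hpy, Ne.symm hqy, fun h => hzy h.symm, hpq, Ne.symm hzp, Ne.symm hzq,
        he1, he2, by rw [hgeq]; exact hg⟩

lemma link_disjoint (h3 : ∀ e ∈ H, e.card = 3) (hK : ¬ HasK43m H) (hF5 : ¬ HasF5 H)
    {p q : V} (hpq : p ≠ q) {g : Finset V} (hg : g ∈ H) (hpg : p ∈ g) (hqg : q ∈ g) :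
    Disjoint (linkv H p) (linkv H q) := by
  rw [Finset.disjoint_left]
  intro s hsp hsq
  obtain ⟨hc, hps, hinsp⟩ := (mem_linkv_iff h3).mp hsp
  obtain ⟨-, hqs, hinsq⟩ := (mem_linkv_iff h3).mp hsq
  exact nonadj_of_common h3 hK hF5 hc hps hqs hpq hinsp hinsq g hg ⟨hpg, hqg⟩

lemma indep_pair {A e : Finset V} (hI : IsIndep H A) (he : e ∈ H) {u v : V}
    (hu : u ∈ e) (hv : v ∈ e) (huv : u ≠ v) (huA : u ∈ A) (hvA : v ∈ A) : False := by
  have h := hI e he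
  have hsub : ({u, v} : Finset V) ⊆ e ∩ A := by
    intro t ht
    rcases Finset.mem_insert.mp ht with rfl | ht
    · exact Finset.mem_inter.mpr ⟨hu, huA⟩
    · rcases Finset.mem_singleton.mp ht with rfl
      exact Finset.mem_inter.mpr ⟨hv, hvA⟩
  have h2 := Finset.card_le_card hsub
  rw [Finset.card_pair huv] at h2
  omega


section FT
variable [Fintype V]

lemma card_filter_mem (M : Finset (Finset V)) (h2 : ∀ s ∈ M, s.card = 2) (t : V) :
    (M.filter fun s => t ∈ s).card
      = (Finset.univ.filter fun z => insert t ({z} : Finset V) ∈ M).card := by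
  have hne : ∀ z : V, insert t ({z} : Finset V) ∈ M → z ≠ t := by
    intro z hz h
    have h2' := h2 _ hz
    rw [h] at h2'
    simp at h2'
  have hset : M.filter (fun s => t ∈ s)
      = (Finset.univ.filter fun z => insert t ({z} : Finset V) ∈ M).image
          (fun z => insert t ({z} : Finset V)) := by
    ext s
    simp only [mem_filter, mem_image, Finset.mem_univ, true_and]
    constructor
    · rintro ⟨hsM, hts⟩
      obtain ⟨a, b, hab, rfl⟩ := Finset.card_eq_two.mp (h2 _ hsM)
      rcases Finset.mem_insert.mp hts with rfl | hb
      · exact ⟨b, hsM, rfl⟩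
      · rcases Finset.mem_singleton.mp hb with rfl
        exact ⟨a, by rwa [Finset.pair_comm], by rw [Finset.pair_comm]⟩
    · rintro ⟨z, hz, rfl⟩
      exact ⟨hz, Finset.mem_insert_self _ _⟩
  rw [hset, Finset.card_image_of_injOn]
  intro z1 h1 z2 h2' heq
  dsimp only at heq
  simp only [coe_filter, Set.mem_setOf_eq, Finset.mem_univ, true_and] at h1 h2'
  have : z1 ∈ insert t ({z2} : Finset V) := by rw [← heq]; simp
  rcases Finset.mem_insert.mp this with h | h
  · exact absurd h (hne z1 h1)
  · exact Finset.mem_singleton.mp h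

lemma mantel_pairs (M : Finset (Finset V)) (T : Finset V)
    (h2 : ∀ s ∈ M, s.card = 2) (hsub : ∀ s ∈ M, s ⊆ T)
    (htri : ∀ x y z : V, ({x, y} : Finset V) ∈ M → ({x, z} : Finset V) ∈ M →
      ({y, z} : Finset V) ∈ M → x ≠ y → x ≠ z → y ≠ z → False) :
    (4 : ℝ) * M.card ≤ (T.card : ℝ) ^ 2 := by
  classical
  set d : V → ℕ := fun t => (M.filter fun s => t ∈ s).card with hd
  have hsum1 : ∑ t ∈ T, d t = 2 * M.card := by
    have h1 : ∑ t ∈ T, d t = ∑ s ∈ M, (T.filter fun t => t ∈ s).card := by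
      simp only [hd, Finset.card_filter]
      rw [Finset.sum_comm]
    rw [h1]
    have h2' : ∀ s ∈ M, (T.filter fun t => t ∈ s).card = 2 := by
      intro s hs
      rw [Finset.filter_mem_eq_inter, Finset.inter_eq_right.mpr (hsub s hs), h2 s hs]
    rw [Finset.sum_congr rfl h2', Finset.sum_const, smul_eq_mul, mul_comm]
  -- neighborhoods
  set N : V → Finset V := fun t => Finset.univ.filter fun z => insert t ({z} : Finset V) ∈ M
    with hN
  have hdN : ∀ t, d t = (N t).card := fun t => card_filter_mem M h2 t
  have hNsubT : ∀ t, N t ⊆ T := by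
    intro t z hz
    simp only [hN, mem_filter, Finset.mem_univ, true_and] at hz
    exact hsub _ hz (by simp)
  have hNne : ∀ t z, z ∈ N t → z ≠ t := by
    intro t z hz h
    simp only [hN, mem_filter, Finset.mem_univ, true_and] at hz
    have := h2 _ hz
    rw [h] at this
    simp at this
  have hpair : ∀ x y : V, x ≠ y → ({x, y} : Finset V) ∈ M → d x + d y ≤ T.card := by
    intro x y hxy hm
    have hdisj : Disjoint (N x) (N y) := by
      rw [Finset.disjoint_left]
      intro z hzx hzy
      have hzx' : insert x ({z} : Finset V) ∈ M := by
        simpa only [hN, mem_filter, Finset.mem_univ, true_and] using hzx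
      have hzy' : insert y ({z} : Finset V) ∈ M := by
        simpa only [hN, mem_filter, Finset.mem_univ, true_and] using hzy
      exact htri x y z hm hzx' hzy' hxy (Ne.symm (hNne x z hzx)) (Ne.symm (hNne y z hzy))
    calc d x + d y = (N x ∪ N y).card := by
          rw [hdN, hdN, Finset.card_union_of_disjoint hdisj]
      _ ≤ T.card := Finset.card_le_card (Finset.union_subset (hNsubT x) (hNsubT y))
  have hsum2 : ∑ t ∈ T, d t * d t ≤ M.card * T.card := by
    have key : ∑ t ∈ T, d t * d t = ∑ s ∈ M, ∑ t ∈ s, d t := by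
      have h1 : ∀ s ∈ M, ∑ t ∈ s, d t = ∑ t ∈ T, if t ∈ s then d t else 0 := by
        intro s hs
        rw [← Finset.sum_filter, Finset.filter_mem_eq_inter,
          Finset.inter_eq_right.mpr (hsub s hs)]
      rw [Finset.sum_congr rfl h1, Finset.sum_comm]
      apply Finset.sum_congr rfl
      intro t _
      rw [← Finset.sum_filter, Finset.sum_const, smul_eq_mul]
    rw [key]
    have hbound : ∀ s ∈ M, ∑ t ∈ s, d t ≤ T.card := by
      intro s hs
      obtain ⟨x, y, hxy, rfl⟩ := Finset.card_eq_two.mp (h2 s hs)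
      rw [Finset.sum_pair hxy]
      exact hpair x y hxy hs
    calc ∑ s ∈ M, ∑ t ∈ s, d t ≤ ∑ s ∈ M, T.card := Finset.sum_le_sum hbound
      _ = M.card * T.card := by rw [Finset.sum_const, smul_eq_mul]
  -- Cauchy-Schwarz
  have hCS : (∑ t ∈ T, (d t : ℝ)) ^ 2 ≤ (T.card : ℝ) * ∑ t ∈ T, (d t : ℝ) ^ 2 :=
    sq_sum_le_card_mul_sum_sq
  have h1R : (∑ t ∈ T, (d t : ℝ)) = 2 * M.card := by
    rw [← Nat.cast_sum]
    exact_mod_cast congrArg (Nat.cast : ℕ → ℝ) hsum1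
  have h2R : ∑ t ∈ T, (d t : ℝ) ^ 2 ≤ (M.card : ℝ) * T.card := by
    have : ∑ t ∈ T, (d t : ℝ) ^ 2 = ((∑ t ∈ T, d t * d t : ℕ) : ℝ) := by
      push_cast
      apply Finset.sum_congr rfl
      intro t _
      ring
    rw [this]
    exact_mod_cast hsum2
  have hcomb : (4 : ℝ) * (M.card : ℝ) ^ 2 ≤ (M.card : ℝ) * (T.card : ℝ) ^ 2 := by
    nlinarith [hCS, h1R, h2R, Nat.cast_nonneg (α := ℝ) T.card]
  rcases Nat.eq_zero_or_pos M.card with h | h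
  · rw [h]
    have h0 : (0:ℝ) ≤ (T.card:ℝ)^2 := sq_nonneg _
    simpa using h0
  · have hM : (0 : ℝ) < M.card := by exact_mod_cast h
    nlinarith [hcomb, hM]


lemma fiber_indep (h3 : ∀ e ∈ H, e.card = 3) (hK : ¬ HasK43m H) (hF5 : ¬ HasF5 H)
    (v t : V) :
    IsIndep H (Finset.univ.filter fun z => insert t ({z} : Finset V) ∈ linkv H v) := by
  intro e he
  by_contra hcon
  push_neg at hcon
  obtain ⟨c, hc, d, hd, hcd⟩ := Finset.one_lt_card.mp hcon
  obtain ⟨hce, hcL⟩ := Finset.mem_inter.mp hc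
  obtain ⟨hde, hdL⟩ := Finset.mem_inter.mp hd
  have hcL' : insert t ({c} : Finset V) ∈ linkv H v := (Finset.mem_filter.mp hcL).2
  have hdL' : insert t ({d} : Finset V) ∈ linkv H v := (Finset.mem_filter.mp hdL).2
  obtain ⟨hc2, hvns, hcH⟩ := (mem_linkv_iff h3).mp hcL'
  obtain ⟨hd2, hvns', hdH⟩ := (mem_linkv_iff h3).mp hdL'
  have hct : c ≠ t := by intro h; rw [h] at hc2; simp at hc2
  have hdt : d ≠ t := by intro h; rw [h] at hd2; simp at hd2
  have hvt : v ≠ t := fun h => hvns (by simp [h])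
  have hvc : v ≠ c := fun h => hvns (by simp [h])
  have hvd : v ≠ d := fun h => hvns' (by simp [h])
  have hins_c : insert c ({v, t} : Finset V) ∈ H := by
    have hh : insert c ({v, t} : Finset V) = insert v (insert t ({c} : Finset V)) := by
      ext u; simp; tauto
    rw [hh]; exact hcH
  have hins_d : insert d ({v, t} : Finset V) ∈ H := by
    have hh : insert d ({v, t} : Finset V) = insert v (insert t ({d} : Finset V)) := by
      ext u; simp; tauto
    rw [hh]; exact hdH
  exact nonadj_of_common h3 hK hF5 (Finset.card_pair hvt)
    (by simp [Ne.symm hvc, hct]) (by simp [Ne.symm hvd, hdt]) hcd hins_c hins_d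
    e he ⟨hce, hde⟩

lemma WE_bound (h3 : ∀ e ∈ H, e.card = 3) (hK : ¬ HasK43m H) (hF5 : ¬ HasF5 H)
    (α : ℝ) (nn : ℕ)
    (hind : ∀ I : Finset V, IsIndep H I → (I.card : ℝ) ≤ α * nn)
    (D : Finset V) (v : V) :
    (((linkv H v).filter fun s => ¬ s ⊆ D).card : ℝ)
      ≤ ((Finset.univ \ D).card : ℝ) * (α * nn) := by
  classical
  set W := Finset.univ \ D with hW
  have hsub : (linkv H v).filter (fun s => ¬ s ⊆ D)
      ⊆ W.biUnion (fun t => (linkv H v).filter fun s => t ∈ s) := by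
    intro s hs
    rw [Finset.mem_filter] at hs
    obtain ⟨hsL, hns⟩ := hs
    obtain ⟨t, hts, htD⟩ := Finset.not_subset.mp hns
    exact Finset.mem_biUnion.mpr ⟨t, Finset.mem_sdiff.mpr ⟨Finset.mem_univ _, htD⟩,
      Finset.mem_filter.mpr ⟨hsL, hts⟩⟩
  have h1 : ((linkv H v).filter fun s => ¬ s ⊆ D).card
      ≤ ∑ t ∈ W, ((linkv H v).filter fun s => t ∈ s).card :=
    le_trans (Finset.card_le_card hsub) Finset.card_biUnion_le
  have h2 : ∀ t ∈ W, (((linkv H v).filter fun s => t ∈ s).card : ℝ) ≤ α * nn := by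
    intro t _
    rw [card_filter_mem _ (fun s hs => ((mem_linkv_iff h3).mp hs).1) t]
    exact hind _ (fiber_indep h3 hK hF5 v t)
  calc (((linkv H v).filter fun s => ¬ s ⊆ D).card : ℝ)
      ≤ ∑ t ∈ W, (((linkv H v).filter fun s => t ∈ s).card : ℝ) := by
        rw [← Nat.cast_sum]; exact_mod_cast h1
    _ ≤ ∑ t ∈ W, (α * nn) := Finset.sum_le_sum h2
    _ = W.card * (α * nn) := by rw [Finset.sum_const, nsmul_eq_mul]

-- cross pairs
def crp (P Q : Finset V) : Finset (Finset V) :=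
  (P ×ˢ Q).image fun pr => ({pr.1, pr.2} : Finset V)

lemma mem_crp_of {P Q : Finset V} {a b : V} (ha : a ∈ P) (hb : b ∈ Q) :
    ({a, b} : Finset V) ∈ crp P Q :=
  Finset.mem_image.mpr ⟨(a, b), Finset.mem_product.mpr ⟨ha, hb⟩, rfl⟩

lemma crp_elim {P Q : Finset V} {s : Finset V} (hs : s ∈ crp P Q) :
    ∃ a ∈ P, ∃ b ∈ Q, s = ({a, b} : Finset V) := by
  obtain ⟨pr, hpr, rfl⟩ := Finset.mem_image.mp hs
  obtain ⟨h1, h2⟩ := Finset.mem_product.mp hpr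
  exact ⟨pr.1, h1, pr.2, h2, rfl⟩

lemma card_crp (P Q : Finset V) : (crp P Q).card ≤ P.card * Q.card :=
  le_trans Finset.card_image_le (le_of_eq (Finset.card_product P Q))

lemma crp_disj {P Q P' Q' : Finset V} (h : ∀ a ∈ P, ∀ b ∈ Q, a ∉ P' ∧ a ∉ Q' ∨ b ∉ P' ∧ b ∉ Q') :
    Disjoint (crp P Q) (crp P' Q') := by
  rw [Finset.disjoint_left]
  intro s hs hs'
  obtain ⟨a, ha, b, hb, rfl⟩ := crp_elim hs
  obtain ⟨a', ha', b', hb', heq⟩ := crp_elim hs'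
  have haab : a ∈ ({a', b'} : Finset V) := by rw [← heq]; simp
  have hbab : b ∈ ({a', b'} : Finset V) := by rw [← heq]; simp
  rcases h a ha b hb with ⟨h1, h2⟩ | ⟨h1, h2⟩
  · rcases Finset.mem_insert.mp haab with rfl | hm
    · exact h1 ha'
    · rcases Finset.mem_singleton.mp hm with rfl
      exact h2 hb'
  · rcases Finset.mem_insert.mp hbab with rfl | hm
    · exact h1 ha'
    · rcases Finset.mem_singleton.mp hm with rfl
      exact h2 hb'

lemma classify_in (h3 : ∀ e ∈ H, e.card = 3) {P Q R : Finset V}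
    (hiP : IsIndep H P) (hiQ : IsIndep H Q) (hiR : IsIndep H R)
    {v : V} (hvP : v ∈ P) {s : Finset V} (hs : s ∈ linkv H v)
    (hsub : s ⊆ P ∪ Q ∪ R) : s ∈ crp Q R := by
  obtain ⟨hc, hvs, hins⟩ := (mem_linkv_iff h3).mp hs
  obtain ⟨a, b, hab, rfl⟩ := Finset.card_eq_two.mp hc
  have hav : a ≠ v := fun h => hvs (by simp [h.symm])
  have hbv : b ≠ v := fun h => hvs (by simp [h.symm])
  have hae : a ∈ insert v ({a, b} : Finset V) := by simp
  have hbe : b ∈ insert v ({a, b} : Finset V) := by simp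
  have hve : v ∈ insert v ({a, b} : Finset V) := by simp
  have haP : a ∉ P := fun h => indep_pair hiP hins hae hve hav h hvP
  have hbP : b ∉ P := fun h => indep_pair hiP hins hbe hve hbv h hvP
  have haU : a ∈ P ∪ Q ∪ R := hsub (by simp)
  have hbU : b ∈ P ∪ Q ∪ R := hsub (by simp)
  have ha' : a ∈ Q ∨ a ∈ R := by
    rcases Finset.mem_union.mp haU with h | h
    · rcases Finset.mem_union.mp h with h | h
      · exact absurd h haP
      · exact Or.inl h
    · exact Or.inr h
  have hb' : b ∈ Q ∨ b ∈ R := by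
    rcases Finset.mem_union.mp hbU with h | h
    · rcases Finset.mem_union.mp h with h | h
      · exact absurd h hbP
      · exact Or.inl h
    · exact Or.inr h
  rcases ha' with ha | ha <;> rcases hb' with hb | hb
  · exact (indep_pair hiQ hins hae hbe hab ha hb).elim
  · exact mem_crp_of ha hb
  · rw [Finset.pair_comm]; exact mem_crp_of hb ha
  · exact (indep_pair hiR hins hae hbe hab ha hb).elim

lemma classify_any (h3 : ∀ e ∈ H, e.card = 3) {P Q R : Finset V}
    (hiP : IsIndep H P) (hiQ : IsIndep H Q) (hiR : IsIndep H R)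
    {v : V} {s : Finset V} (hs : s ∈ linkv H v)
    (hsub : s ⊆ P ∪ Q ∪ R) : s ∈ crp P Q ∪ crp P R ∪ crp Q R := by
  obtain ⟨hc, hvs, hins⟩ := (mem_linkv_iff h3).mp hs
  obtain ⟨a, b, hab, rfl⟩ := Finset.card_eq_two.mp hc
  have hae : a ∈ insert v ({a, b} : Finset V) := by simp
  have hbe : b ∈ insert v ({a, b} : Finset V) := by simp
  have haU : a ∈ P ∪ Q ∪ R := hsub (by simp)
  have hbU : b ∈ P ∪ Q ∪ R := hsub (by simp)
  have ha' : a ∈ P ∨ a ∈ Q ∨ a ∈ R := by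
    rcases Finset.mem_union.mp haU with h | h
    · rcases Finset.mem_union.mp h with h | h
      · exact Or.inl h
      · exact Or.inr (Or.inl h)
    · exact Or.inr (Or.inr h)
  have hb' : b ∈ P ∨ b ∈ Q ∨ b ∈ R := by
    rcases Finset.mem_union.mp hbU with h | h
    · rcases Finset.mem_union.mp h with h | h
      · exact Or.inl h
      · exact Or.inr (Or.inl h)
    · exact Or.inr (Or.inr h)
  rcases ha' with ha | ha | ha <;> rcases hb' with hb | hb | hb
  · exact (indep_pair hiP hins hae hbe hab ha hb).elim
  · exact Finset.mem_union_left _ (Finset.mem_union_left _ (mem_crp_of ha hb))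
  · exact Finset.mem_union_left _ (Finset.mem_union_right _ (mem_crp_of ha hb))
  · refine Finset.mem_union_left _ (Finset.mem_union_left _ ?_)
    rw [Finset.pair_comm]; exact mem_crp_of hb ha
  · exact (indep_pair hiQ hins hae hbe hab ha hb).elim
  · exact Finset.mem_union_right _ (mem_crp_of ha hb)
  · refine Finset.mem_union_left _ (Finset.mem_union_right _ ?_)
    rw [Finset.pair_comm]; exact mem_crp_of hb ha
  · refine Finset.mem_union_right _ ?_
    rw [Finset.pair_comm]; exact mem_crp_of hb ha
  · exact (indep_pair hiR hins hae hbe hab ha hb).elim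


set_option maxHeartbeats 1000000 in
lemma conflict_lemma
    (h3 : ∀ e ∈ H, e.card = 3) (hK : ¬ HasK43m H) (hF5 : ¬ HasF5 H)
    (β γ δ : ℝ) (nn : ℕ) (hVc : Fintype.card V = nn)
    (hδH : ∀ v : V, δ * (nn : ℝ) ^ 2 < (degH H v : ℝ))
    (hβh : 1/2 < β) (hγ0 : 0 < γ)
    (hδ2' : (2 - 2*β)^2/4 + (2*β - 1)*γ < 2*δ)
    (A : Finset V) (hA : (2*β - 1) * nn < (A.card : ℝ))
    (p q : V) (hpq : p ≠ q) (g : Finset V) (hg : g ∈ H) (hpg : p ∈ g) (hqg : q ∈ g)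
    (havp : ∀ e ∈ H, p ∈ e → ∀ u ∈ e, u ≠ p → u ∉ A)
    (havq : ∀ e ∈ H, q ∈ e → ∀ u ∈ e, u ≠ q → u ∉ A) : False := by
  classical
  set M := linkv H p ∪ linkv H q with hM
  have h2M : ∀ s ∈ M, s.card = 2 := by
    intro s hs
    rcases Finset.mem_union.mp hs with h | h
    · exact ((mem_linkv_iff h3).mp h).1
    · exact ((mem_linkv_iff h3).mp h).1
  set T := Finset.univ \ A with hT
  have hsubT : ∀ s ∈ M, s ⊆ T := by
    intro s hs u hu
    rw [hT, Finset.mem_sdiff]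
    refine ⟨Finset.mem_univ _, ?_⟩
    rcases Finset.mem_union.mp hs with h | h
    · obtain ⟨-, hps, hins⟩ := (mem_linkv_iff h3).mp h
      exact havp _ hins (Finset.mem_insert_self _ _) u (Finset.mem_insert_of_mem hu)
        (fun h' => hps (h' ▸ hu))
    · obtain ⟨-, hqs, hins⟩ := (mem_linkv_iff h3).mp h
      exact havq _ hins (Finset.mem_insert_self _ _) u (Finset.mem_insert_of_mem hu)
        (fun h' => hqs (h' ▸ hu))
  -- any common "cherry" kills adjacency of the endpoints
  have hkill : ∀ r u v₁ v₂ : V, v₁ ≠ v₂ → ({u, v₁} : Finset V) ∈ linkv H r →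
      ({u, v₂} : Finset V) ∈ linkv H r → ∀ e ∈ H, ¬ (v₁ ∈ e ∧ v₂ ∈ e) := by
    intro r u v₁ v₂ h12 hm1 hm2
    obtain ⟨hc1, hr1, hi1'⟩ := (mem_linkv_iff h3).mp hm1
    obtain ⟨hc2, hr2, hi2'⟩ := (mem_linkv_iff h3).mp hm2
    have hru : r ≠ u := fun h => hr1 (by simp [h])
    have hrv1 : r ≠ v₁ := fun h => hr1 (by simp [h])
    have hrv2 : r ≠ v₂ := fun h => hr2 (by simp [h])
    have huv1 : u ≠ v₁ := by intro h; rw [h] at hc1; simp at hc1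
    have huv2 : u ≠ v₂ := by intro h; rw [h] at hc2; simp at hc2
    have e1 : insert v₁ ({r, u} : Finset V) ∈ H := by
      have hh : insert v₁ ({r, u} : Finset V) = insert r ({u, v₁} : Finset V) := by
        ext t; simp; tauto
      rw [hh]; exact hi1'
    have e2 : insert v₂ ({r, u} : Finset V) ∈ H := by
      have hh : insert v₂ ({r, u} : Finset V) = insert r ({u, v₂} : Finset V) := by
        ext t; simp; tauto
      rw [hh]; exact hi2'
    exact nonadj_of_common h3 hK hF5 (Finset.card_pair hru)
      (by simp [Ne.symm hrv1, Ne.symm huv1]) (by simp [Ne.symm hrv2, Ne.symm huv2])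
      h12 e1 e2
  have hedge : ∀ s ∈ M, ∃ e ∈ H, s ⊆ e := by
    intro s hs
    rcases Finset.mem_union.mp hs with h | h
    · obtain ⟨-, -, hins⟩ := (mem_linkv_iff h3).mp h
      exact ⟨insert p s, hins, Finset.subset_insert _ _⟩
    · obtain ⟨-, -, hins⟩ := (mem_linkv_iff h3).mp h
      exact ⟨insert q s, hins, Finset.subset_insert _ _⟩
  have app : ∀ r u v₁ v₂ : V, v₁ ≠ v₂ → ({u, v₁} : Finset V) ∈ linkv H r →
      ({u, v₂} : Finset V) ∈ linkv H r → ({v₁, v₂} : Finset V) ∈ M → False := by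
    intro r u v₁ v₂ h12 m1 m2 m3
    obtain ⟨e, he, hsube⟩ := hedge _ m3
    exact hkill r u v₁ v₂ h12 m1 m2 e he ⟨hsube (by simp), hsube (by simp)⟩
  have htri : ∀ x y z : V, ({x, y} : Finset V) ∈ M → ({x, z} : Finset V) ∈ M →
      ({y, z} : Finset V) ∈ M → x ≠ y → x ≠ z → y ≠ z → False := by
    intro x y z h1 h2 h3' hxy hxz hyz
    rcases Finset.mem_union.mp h1 with e1 | e1 <;> rcases Finset.mem_union.mp h2 with e2 | e2
    · exact app p x y z hyz e1 e2 h3'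
    · rcases Finset.mem_union.mp h3' with e3 | e3
      · exact app p y x z hxz (by rw [Finset.pair_comm y x]; exact e1) e3 h2
      · exact app q z x y hxy (by rw [Finset.pair_comm z x]; exact e2)
          (by rw [Finset.pair_comm z y]; exact e3) h1
    · rcases Finset.mem_union.mp h3' with e3 | e3
      · exact app p z x y hxy (by rw [Finset.pair_comm z x]; exact e2)
          (by rw [Finset.pair_comm z y]; exact e3) h1
      · exact app q y x z hxz (by rw [Finset.pair_comm y x]; exact e1) e3 h2
    · exact app q x y z hyz e1 e2 h3'
  have hmantel := mantel_pairs M T h2M hsubT htri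
  have hdisj : Disjoint (linkv H p) (linkv H q) := link_disjoint h3 hK hF5 hpq hg hpg hqg
  have hcardM : M.card = degH H p + degH H q := by
    rw [hM, Finset.card_union_of_disjoint hdisj, card_linkv, card_linkv]
  have hTcard : (T.card : ℝ) = (nn : ℝ) - A.card := by
    rw [hT, Finset.card_sdiff_of_subset (Finset.subset_univ A), Finset.card_univ, hVc]
    have : A.card ≤ nn := by rw [← hVc, ← Finset.card_univ]; exact Finset.card_le_card (Finset.subset_univ A)
    push_cast [Nat.cast_sub this]
    ring
  have hnn1 : (1 : ℝ) ≤ (nn : ℝ) := by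
    have : 0 < Fintype.card V := Fintype.card_pos_iff.mpr ⟨p⟩
    rw [hVc] at this
    exact_mod_cast this
  have hAle : (A.card : ℝ) ≤ (nn : ℝ) := by
    have : A.card ≤ nn := by rw [← hVc, ← Finset.card_univ]; exact Finset.card_le_card (Finset.subset_univ A)
    exact_mod_cast this
  have hdeg : 2 * δ * (nn:ℝ)^2 < (M.card : ℝ) := by
    have h1 := hδH p
    have h2 := hδH q
    rw [hcardM]
    push_cast
    linarith
  -- finish numerically
  have hβ1 : β < 1 := by nlinarith [hA, hAle, hnn1]
  have h0 : (0:ℝ) ≤ (nn:ℝ) - A.card := by linarith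
  have h1 : (nn:ℝ) - A.card < (2 - 2*β) * nn := by nlinarith [hA]
  have hq0 : (0:ℝ) ≤ (2 - 2*β) * nn := by nlinarith
  have hsq : ((nn:ℝ) - A.card)^2 ≤ ((2 - 2*β) * nn)^2 := by nlinarith [h0, h1, hq0]
  rw [hTcard] at hmantel
  nlinarith [hmantel, hdeg, hsq, hδ2', hβh, hγ0, hnn1, mul_pos hγ0 (mul_pos (by linarith : (0:ℝ) < 2*β - 1) (by nlinarith : (0:ℝ) < (nn:ℝ)^2))]


set_option maxHeartbeats 1000000 in
lemma genClaim
    (h3 : ∀ e ∈ H, e.card = 3) (hK : ¬ HasK43m H) (hF5 : ¬ HasF5 H)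
    (α γ δ : ℝ) (nn : ℕ) (hVc : Fintype.card V = nn)
    (hind : ∀ I : Finset V, IsIndep H I → (I.card : ℝ) ≤ α * nn)
    (hδH : ∀ v : V, δ * (nn : ℝ) ^ 2 < (degH H v : ℝ))
    (hγ0 : 0 ≤ γ) (hα6 : 1/6 < α) (hδq : (1 - γ)^2/12 + γ*α < δ)
    (A B C : Finset V)
    (hdAB : Disjoint A B) (hdAC : Disjoint A C) (hdBC : Disjoint B C)
    (hiA : IsIndep H A) (hiB : IsIndep H B) (hiC : IsIndep H C)
    (hS : (1 - γ) * nn < (A.card : ℝ) + B.card + C.card)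
    (w x y z : V) (hw : w ∉ A ∪ B ∪ C) (hxA : x ∈ A) (hyB : y ∈ B) (hzC : z ∈ C)
    (hxy : ({x, y} : Finset V) ∈ linkv H w)
    (hzadj : ∃ g ∈ H, w ∈ g ∧ z ∈ g) : False := by
  classical
  obtain ⟨g, hg, hwg, hzg⟩ := hzadj
  set U := A ∪ B ∪ C with hU
  have hwA : w ∉ A := fun h => hw (Finset.mem_union_left _ (Finset.mem_union_left _ h))
  have hwB : w ∉ B := fun h => hw (Finset.mem_union_left _ (Finset.mem_union_right _ h))
  have hwC : w ∉ C := fun h => hw (Finset.mem_union_right _ h)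
  have hwx : w ≠ x := fun h => hwA (h ▸ hxA)
  have hwy : w ≠ y := fun h => hwB (h ▸ hyB)
  have hwz : w ≠ z := fun h => hwC (h ▸ hzC)
  obtain ⟨hcxy, hwns, he1⟩ := (mem_linkv_iff h3).mp hxy
  have hxe1 : x ∈ insert w ({x, y} : Finset V) := by simp
  have hye1 : y ∈ insert w ({x, y} : Finset V) := by simp
  have hwe1 : w ∈ insert w ({x, y} : Finset V) := by simp
  -- class parts of the four links
  set CE : V → Finset (Finset V) := fun v => (linkv H v).filter fun s => s ⊆ U with hCE
  have hsplit : ∀ v : V, degH H v = (CE v).card + ((linkv H v).filter fun s => ¬ s ⊆ U).card := by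
    intro v
    rw [← card_linkv (H := H) v, hCE]
    exact (Finset.card_filter_add_card_filter_not _).symm
  -- subset relations
  have hCEx : CE x ⊆ crp B C := by
    intro s hs
    rw [hCE, Finset.mem_filter] at hs
    exact classify_in h3 hiA hiB hiC hxA hs.1 hs.2
  have hCEy : CE y ⊆ crp A C := by
    intro s hs
    rw [hCE, Finset.mem_filter] at hs
    refine classify_in h3 hiB hiA hiC hyB hs.1 ?_
    intro t ht
    have := hs.2 ht
    simp only [hU, Finset.mem_union] at this ⊢
    tauto
  have hCEz : CE z ⊆ crp A B := by
    intro s hs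
    rw [hCE, Finset.mem_filter] at hs
    refine classify_in h3 hiC hiA hiB hzC hs.1 ?_
    intro t ht
    have := hs.2 ht
    simp only [hU, Finset.mem_union] at this ⊢
    tauto
  have hCEw : CE w ⊆ crp A B ∪ crp A C ∪ crp B C := by
    intro s hs
    rw [hCE, Finset.mem_filter] at hs
    exact classify_any h3 hiA hiB hiC hs.1 hs.2
  -- disjointness
  have hdisj_wx : Disjoint (CE w) (CE x) :=
    Finset.disjoint_filter_filter (link_disjoint h3 hK hF5 hwx he1 hwe1 hxe1)
  have hdisj_wy : Disjoint (CE w) (CE y) :=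
    Finset.disjoint_filter_filter (link_disjoint h3 hK hF5 hwy he1 hwe1 hye1)
  have hdisj_wz : Disjoint (CE w) (CE z) :=
    Finset.disjoint_filter_filter (link_disjoint h3 hK hF5 hwz hg hwg hzg)
  have hd_ab_ac : Disjoint (crp A B) (crp A C) := by
    apply crp_disj
    intro a ha b hb
    right
    exact ⟨Finset.disjoint_left.mp hdAB.symm hb, Finset.disjoint_left.mp hdBC hb⟩
  have hd_ab_bc : Disjoint (crp A B) (crp B C) := by
    apply crp_disj
    intro a ha b hb
    left
    exact ⟨Finset.disjoint_left.mp hdAB ha, Finset.disjoint_left.mp hdAC ha⟩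
  have hd_ac_bc : Disjoint (crp A C) (crp B C) := by
    apply crp_disj
    intro a ha c hc
    left
    exact ⟨Finset.disjoint_left.mp hdAB ha, Finset.disjoint_left.mp hdAC ha⟩
  -- pairwise disjointness of the four class parts
  have hd_xy : Disjoint (CE x) (CE y) :=
    Finset.disjoint_of_subset_left hCEx (Finset.disjoint_of_subset_right hCEy hd_ac_bc.symm)
  have hd_xz : Disjoint (CE x) (CE z) :=
    Finset.disjoint_of_subset_left hCEx (Finset.disjoint_of_subset_right hCEz hd_ab_bc.symm)
  have hd_yz : Disjoint (CE y) (CE z) :=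
    Finset.disjoint_of_subset_left hCEy (Finset.disjoint_of_subset_right hCEz hd_ab_ac.symm)
  -- the union bound
  have hpool : CE w ∪ CE x ∪ CE y ∪ CE z ⊆ crp A B ∪ crp A C ∪ crp B C := by
    intro s hs
    rcases Finset.mem_union.mp hs with hs' | hs'
    · rcases Finset.mem_union.mp hs' with hs'' | hs''
      · rcases Finset.mem_union.mp hs'' with h | h
        · exact hCEw h
        · exact Finset.mem_union_right _ (hCEx h)
      · exact Finset.mem_union_left _ (Finset.mem_union_right _ (hCEy hs''))
    · exact Finset.mem_union_left _ (Finset.mem_union_left _ (hCEz hs'))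
  have hcard_sum : (CE w).card + (CE x).card + (CE y).card + (CE z).card
      ≤ A.card * B.card + A.card * C.card + B.card * C.card := by
    have hu1 : (CE w ∪ CE x).card = (CE w).card + (CE x).card :=
      Finset.card_union_of_disjoint hdisj_wx
    have hd2 : Disjoint (CE w ∪ CE x) (CE y) :=
      Finset.disjoint_union_left.mpr ⟨hdisj_wy, hd_xy⟩
    have hu2 : (CE w ∪ CE x ∪ CE y).card = (CE w).card + (CE x).card + (CE y).card := by
      rw [Finset.card_union_of_disjoint hd2, hu1]
    have hd3 : Disjoint (CE w ∪ CE x ∪ CE y) (CE z) :=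
      Finset.disjoint_union_left.mpr ⟨Finset.disjoint_union_left.mpr ⟨hdisj_wz, hd_xz⟩, hd_yz⟩
    have hu3 : (CE w ∪ CE x ∪ CE y ∪ CE z).card
        = (CE w).card + (CE x).card + (CE y).card + (CE z).card := by
      rw [Finset.card_union_of_disjoint hd3, hu2]
    calc (CE w).card + (CE x).card + (CE y).card + (CE z).card
        = (CE w ∪ CE x ∪ CE y ∪ CE z).card := hu3.symm
      _ ≤ (crp A B ∪ crp A C ∪ crp B C).card := Finset.card_le_card hpool
      _ ≤ (crp A B).card + (crp A C).card + (crp B C).card := by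
          calc (crp A B ∪ crp A C ∪ crp B C).card
              ≤ (crp A B ∪ crp A C).card + (crp B C).card := Finset.card_union_le _ _
            _ ≤ (crp A B).card + (crp A C).card + (crp B C).card := by
                have := Finset.card_union_le (crp A B) (crp A C)
                omega
      _ ≤ A.card * B.card + A.card * C.card + B.card * C.card := by
          have h1 := card_crp A B
          have h2 := card_crp A C
          have h3' := card_crp B C
          omega
  -- W-part bounds
  have hWB : ∀ v : V, (((linkv H v).filter fun s => ¬ s ⊆ U).card : ℝ)
      ≤ ((Finset.univ \ U).card : ℝ) * (α * nn) := fun v =>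
    WE_bound h3 hK hF5 α nn hind U v
  -- cardinal arithmetic for U and W
  have hUcard : U.card = A.card + B.card + C.card := by
    rw [hU, Finset.card_union_of_disjoint, Finset.card_union_of_disjoint hdAB]
    exact Finset.disjoint_union_left.mpr ⟨hdAC, hdBC⟩
  have hUle : U.card ≤ nn := by
    rw [← hVc, ← Finset.card_univ]
    exact Finset.card_le_card (Finset.subset_univ U)
  have hWcard : ((Finset.univ \ U).card : ℝ) = (nn : ℝ) - ((A.card : ℝ) + B.card + C.card) := by
    rw [Finset.card_sdiff_of_subset (Finset.subset_univ U), Finset.card_univ, hVc,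
      Nat.cast_sub hUle, hUcard]
    push_cast
    ring
  -- assemble
  have hdeg4 : 4 * (δ * (nn:ℝ)^2)
      < ((A.card : ℝ) * B.card + (A.card : ℝ) * C.card + (B.card : ℝ) * C.card)
        + 4 * (((nn:ℝ) - ((A.card : ℝ) + B.card + C.card)) * (α * nn)) := by
    have hb : ∀ v : V, (degH H v : ℝ) ≤ ((CE v).card : ℝ)
        + ((nn:ℝ) - ((A.card : ℝ) + B.card + C.card)) * (α * nn) := by
      intro v
      have h1 := hsplit v
      have h2 := hWB v
      rw [hWcard] at h2
      have : (degH H v : ℝ) = ((CE v).card : ℝ) + (((linkv H v).filter fun s => ¬ s ⊆ U).card : ℝ) := by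
        exact_mod_cast congrArg (Nat.cast : ℕ → ℝ) h1
      linarith
    have hsum' : ((CE w).card : ℝ) + (CE x).card + (CE y).card + (CE z).card
        ≤ (A.card : ℝ) * B.card + (A.card : ℝ) * C.card + (B.card : ℝ) * C.card := by
      exact_mod_cast hcard_sum
    have h1 := hδH w
    have h2 := hδH x
    have h3' := hδH y
    have h4 := hδH z
    have hb1 := hb w
    have hb2 := hb x
    have hb3 := hb y
    have hb4 := hb z
    linarith
  -- numeric contradiction
  have hnn1 : (1:ℝ) ≤ (nn:ℝ) := by
    have : 0 < Fintype.card V := Fintype.card_pos_iff.mpr ⟨w⟩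
    rw [hVc] at this
    exact_mod_cast this
  set a := (A.card : ℝ)
  set b := (B.card : ℝ)
  set c := (C.card : ℝ)
  have hSle : a + b + c ≤ (nn:ℝ) := by
    have : (U.card : ℝ) ≤ (nn : ℝ) := by exact_mod_cast hUle
    rw [hUcard] at this
    push_cast at this
    linarith
  set S := a + b + c with hSdef
  have hprod : 3 * (a*b + a*c + b*c) ≤ S^2 := by
    nlinarith [sq_nonneg (a-b), sq_nonneg (a-c), sq_nonneg (b-c)]
  have hT0 : (0:ℝ) ≤ S - (1-γ)*nn := by linarith [hS]
  have hT1 : S + (1-γ)*nn ≤ 2*nn := by nlinarith [hγ0, hnn1]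
  have hT2 : (0:ℝ) ≤ 4*α*(nn:ℝ) - (S + (1-γ)*nn)/3 := by nlinarith [hα6, hnn1]
  have hmono : S^2/3 + 4*(α*(nn:ℝ))*((nn:ℝ) - S)
      ≤ ((1-γ)*nn)^2/3 + 4*(α*(nn:ℝ))*((nn:ℝ) - (1-γ)*nn) := by
    nlinarith [mul_nonneg hT0 hT2]
  have hfin : 4*(δ*(nn:ℝ)^2) < ((1-γ)*nn)^2/3 + 4*(α*(nn:ℝ))*((nn:ℝ) - (1-γ)*nn) := by
    have : a*b + a*c + b*c ≤ S^2/3 := by nlinarith [hprod]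
    nlinarith [hdeg4]
  have hm2 : (0:ℝ) < (nn:ℝ)^2 := by nlinarith
  nlinarith [hfin, mul_lt_mul_of_pos_right hδq hm2]


end FT
end AuxLink

set_option maxHeartbeats 2000000 in
/-- If a `{K₄³⁻, F₅}`-free 3-graph `H` with `α(H) ≤ αn` and `δ(H) > δn²` contains three
pairwise disjoint independent sets that are pairwise large and almost cover `V(H)`,
then `H` is 3-partite. -/
theorem tripartite_from_three_indep_sets
    (α β δ γ : ℝ) (hα : 0 < α) (hβ0 : 0 < β) (hδ0 : 0 < δ) (hγ : 0 < γ)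
    (hβ : 1 / 2 < β)
    (hδ1 : max (max (β * (1 - β) / 3 + γ * α) ((1 - γ) ^ 2 / 12 + γ * α)) (1 / 12) < δ)
    (hδ2 : 1 / 2 * max ((2 - 2 * β) ^ 2 / 4 + (2 * β - 1) * γ) (β ^ 2 / 4 + (1 - β) * γ) < δ)
    (n : ℕ) (V : Type*) [Fintype V] [DecidableEq V] (hV : Fintype.card V = n)
    (H : Finset (Finset V)) (h3 : ∀ e ∈ H, e.card = 3)
    (hK : ¬ HasK43m H) (hF5 : ¬ HasF5 H)
    (hind : ∀ I : Finset V, IsIndep H I → (I.card : ℝ) ≤ α * n)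
    (hδH : ∀ v : V, δ * (n : ℝ) ^ 2 < (degH H v : ℝ))
    (U₁ U₂ U₃ : Finset V)
    (hd12 : Disjoint U₁ U₂) (hd13 : Disjoint U₁ U₃) (hd23 : Disjoint U₂ U₃)
    (hi1 : IsIndep H U₁) (hi2 : IsIndep H U₂) (hi3 : IsIndep H U₃)
    (hp12 : β * n < (U₁.card : ℝ) + U₂.card)
    (hp13 : β * n < (U₁.card : ℝ) + U₃.card)
    (hp23 : β * n < (U₂.card : ℝ) + U₃.card)
    (hsum : (1 - γ) * n < (U₁.card : ℝ) + U₂.card + U₃.card) :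
    Tripartite H := by
  classical
  -- trivial case: no vertices
  rcases Nat.eq_zero_or_pos n with hn0 | hnpos
  · refine ⟨fun _ => 0, ?_⟩
    intro e he u hu v hv huv
    exfalso
    have hce : e.card ≤ Fintype.card V := by
      rw [← Finset.card_univ]
      exact Finset.card_le_card (Finset.subset_univ e)
    rw [hV, hn0, h3 e he] at hce
    omega
  have hn1 : (1 : ℝ) ≤ (n : ℝ) := by exact_mod_cast hnpos
  -- unpack the delta conditions
  have hδa : β * (1 - β) / 3 + γ * α < δ :=
    lt_of_le_of_lt (le_trans (le_max_left _ _) (le_max_left _ _)) hδ1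
  have hδb : (1 - γ) ^ 2 / 12 + γ * α < δ :=
    lt_of_le_of_lt (le_trans (le_max_right _ _) (le_max_left _ _)) hδ1
  have hδ2' : (2 - 2*β)^2/4 + (2*β - 1)*γ < 2*δ := by
    have h := le_max_left ((2 - 2*β)^2/4 + (2*β - 1)*γ) (β^2/4 + (1 - β)*γ)
    linarith
  -- cardinality facts
  have hUdisj : Disjoint (U₁ ∪ U₂) U₃ := Finset.disjoint_union_left.mpr ⟨hd13, hd23⟩
  have hUcard : (U₁ ∪ U₂ ∪ U₃).card = U₁.card + U₂.card + U₃.card := by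
    rw [Finset.card_union_of_disjoint hUdisj, Finset.card_union_of_disjoint hd12]
  have hUle : (U₁ ∪ U₂ ∪ U₃).card ≤ n := by
    rw [← hV, ← Finset.card_univ]
    exact Finset.card_le_card (Finset.subset_univ _)
  have hUsumR : (U₁.card : ℝ) + U₂.card + U₃.card ≤ (n : ℝ) := by
    have h := hUle
    rw [hUcard] at h
    exact_mod_cast h
  have hc3nn : (0:ℝ) ≤ (U₃.card : ℝ) := Nat.cast_nonneg _
  have hβ1 : β < 1 := by nlinarith [hp12, hUsumR, hn1, hc3nn]
  have hα4 : 1/4 < α := by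
    nlinarith [hind U₁ hi1, hind U₂ hi2, hp12, hβ, hn1]
  have hα6 : 1/6 < α := by linarith
  -- size of each part
  have hA1 : (2*β - 1) * n < (U₁.card : ℝ) := by linarith [hp12, hp13, hUsumR]
  have hA2 : (2*β - 1) * n < (U₂.card : ℝ) := by linarith [hp12, hp23, hUsumR]
  have hA3 : (2*β - 1) * n < (U₃.card : ℝ) := by linarith [hp13, hp23, hUsumR]
  -- "sees" predicate
  set Sees : Finset V → V → Prop := fun D v => ∃ e ∈ H, v ∈ e ∧ ∃ u ∈ D, u ∈ e with hSees
  -- MAIN CLAIM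
  have mainClaim : ∀ w : V, w ∉ U₁ ∪ U₂ ∪ U₃ →
      Sees U₁ w → Sees U₂ w → Sees U₃ w → False := by
    intro w hw hs1 hs2 hs3
    -- there is a class edge in the link of w
    have hWcard : ((Finset.univ \ (U₁ ∪ U₂ ∪ U₃)).card : ℝ) < γ * n := by
      rw [Finset.card_sdiff_of_subset (Finset.subset_univ _), Finset.card_univ, hV,
        Nat.cast_sub hUle, hUcard]
      push_cast
      linarith
    have hsplitw : degH H w = ((linkv H w).filter fun s => s ⊆ U₁ ∪ U₂ ∪ U₃).card
        + ((linkv H w).filter fun s => ¬ s ⊆ U₁ ∪ U₂ ∪ U₃).card := by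
      rw [← card_linkv (H := H) w]
      exact (Finset.card_filter_add_card_filter_not _).symm
    have hcls : ((linkv H w).filter fun s => s ⊆ U₁ ∪ U₂ ∪ U₃).Nonempty := by
      rw [Finset.nonempty_iff_ne_empty]
      intro hemp
      have hz : ((linkv H w).filter fun s => s ⊆ U₁ ∪ U₂ ∪ U₃).card = 0 := by
        rw [hemp]; rfl
      have hWE := WE_bound h3 hK hF5 α n hind (U₁ ∪ U₂ ∪ U₃) w
      have hdw := hδH w
      have hdegeq : (degH H w : ℝ)
          = (((linkv H w).filter fun s => ¬ s ⊆ U₁ ∪ U₂ ∪ U₃).card : ℝ) := by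
        rw [hsplitw, hz]
        push_cast
        ring
      have hαn : (0:ℝ) < α * n := by positivity
      have hWle : ((Finset.univ \ (U₁ ∪ U₂ ∪ U₃)).card : ℝ) * (α * n) < (γ * n) * (α * n) :=
        mul_lt_mul_of_pos_right hWcard hαn
      have hββ : 0 < β * (1 - β) := mul_pos hβ0 (by linarith)
      nlinarith [hdw, hWE, hδa, hn1]
    obtain ⟨s, hs⟩ := hcls
    rw [Finset.mem_filter] at hs
    obtain ⟨hsL, hssub⟩ := hs
    obtain ⟨hc2, hwns, hins⟩ := (mem_linkv_iff h3).mp hsL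
    obtain ⟨a, b, hab, rfl⟩ := Finset.card_eq_two.mp hc2
    have hae : a ∈ insert w ({a, b} : Finset V) := by simp
    have hbe : b ∈ insert w ({a, b} : Finset V) := by simp
    have haU : a ∈ U₁ ∪ U₂ ∪ U₃ := hssub (by simp)
    have hbU : b ∈ U₁ ∪ U₂ ∪ U₃ := hssub (by simp)
    have ha' : a ∈ U₁ ∨ a ∈ U₂ ∨ a ∈ U₃ := by
      simpa [Finset.mem_union, or_assoc] using haU
    have hb' : b ∈ U₁ ∨ b ∈ U₂ ∨ b ∈ U₃ := by
      simpa [Finset.mem_union, or_assoc] using hbU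
    have hw132 : w ∉ U₁ ∪ U₃ ∪ U₂ := by
      simp only [Finset.mem_union] at hw ⊢; tauto
    have hw231 : w ∉ U₂ ∪ U₃ ∪ U₁ := by
      simp only [Finset.mem_union] at hw ⊢; tauto
    have hS132 : (1 - γ) * n < (U₁.card : ℝ) + U₃.card + U₂.card := by linarith
    have hS231 : (1 - γ) * n < (U₂.card : ℝ) + U₃.card + U₁.card := by linarith
    rcases ha' with ha | ha | ha <;> rcases hb' with hb | hb | hb
    · exact indep_pair hi1 hins hae hbe hab ha hb
    · obtain ⟨g, hg, hwg, u, hu, hug⟩ := hs3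
      exact genClaim h3 hK hF5 α γ δ n hV hind hδH hγ.le hα6 hδb U₁ U₂ U₃ hd12 hd13 hd23
        hi1 hi2 hi3 hsum w a b u hw ha hb hu hsL ⟨g, hg, hwg, hug⟩
    · obtain ⟨g, hg, hwg, u, hu, hug⟩ := hs2
      exact genClaim h3 hK hF5 α γ δ n hV hind hδH hγ.le hα6 hδb U₁ U₃ U₂ hd13 hd12
        hd23.symm hi1 hi3 hi2 hS132 w a b u hw132 ha hb hu hsL ⟨g, hg, hwg, hug⟩
    · obtain ⟨g, hg, hwg, u, hu, hug⟩ := hs3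
      exact genClaim h3 hK hF5 α γ δ n hV hind hδH hγ.le hα6 hδb U₁ U₂ U₃ hd12 hd13 hd23
        hi1 hi2 hi3 hsum w b a u hw hb ha hu
        (by rw [Finset.pair_comm b a]; exact hsL) ⟨g, hg, hwg, hug⟩
    · exact indep_pair hi2 hins hae hbe hab ha hb
    · obtain ⟨g, hg, hwg, u, hu, hug⟩ := hs1
      exact genClaim h3 hK hF5 α γ δ n hV hind hδH hγ.le hα6 hδb U₂ U₃ U₁ hd23 hd12.symm
        hd13.symm hi2 hi3 hi1 hS231 w a b u hw231 ha hb hu hsL ⟨g, hg, hwg, hug⟩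
    · obtain ⟨g, hg, hwg, u, hu, hug⟩ := hs2
      exact genClaim h3 hK hF5 α γ δ n hV hind hδH hγ.le hα6 hδb U₁ U₃ U₂ hd13 hd12
        hd23.symm hi1 hi3 hi2 hS132 w b a u hw132 hb ha hu
        (by rw [Finset.pair_comm b a]; exact hsL) ⟨g, hg, hwg, hug⟩
    · obtain ⟨g, hg, hwg, u, hu, hug⟩ := hs1
      exact genClaim h3 hK hF5 α γ δ n hV hind hδH hγ.le hα6 hδb U₂ U₃ U₁ hd23 hd12.symm
        hd13.symm hi2 hi3 hi1 hS231 w b a u hw231 hb ha hu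
        (by rw [Finset.pair_comm b a]; exact hsL) ⟨g, hg, hwg, hug⟩
    · exact indep_pair hi3 hins hae hbe hab ha hb
  -- construct the coloring
  obtain ⟨P, hP1, hP2, hP3, hP4, hP5, hP6⟩ :
      ∃ P : V → Fin 3,
        (∀ v, v ∈ U₁ → P v = 0) ∧
        (∀ v, v ∉ U₁ → v ∈ U₂ → P v = 1) ∧
        (∀ v, v ∉ U₁ → v ∉ U₂ → v ∈ U₃ → P v = 2) ∧
        (∀ v, v ∉ U₁ → v ∉ U₂ → v ∉ U₃ → ¬ Sees U₁ v → P v = 0) ∧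
        (∀ v, v ∉ U₁ → v ∉ U₂ → v ∉ U₃ → Sees U₁ v → ¬ Sees U₂ v → P v = 1) ∧
        (∀ v, v ∉ U₁ → v ∉ U₂ → v ∉ U₃ → Sees U₁ v → Sees U₂ v → P v = 2) := by
    refine ⟨fun v => if v ∈ U₁ then 0 else if v ∈ U₂ then 1 else if v ∈ U₃ then 2
      else if Sees U₁ v then (if Sees U₂ v then 2 else 1) else 0, ?_, ?_, ?_, ?_, ?_, ?_⟩
    · intro v hv; simp [hv]
    · intro v h1 h2; simp [h1, h2]
    · intro v h1 h2 h3'; simp [h1, h2, h3']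
    · intro v h1 h2 h3' h4; simp [h1, h2, h3', h4]
    · intro v h1 h2 h3' h4 h5; simp [h1, h2, h3', h4, h5]
    · intro v h1 h2 h3' h4 h5; simp [h1, h2, h3', h4, h5]
  -- avoidance properties
  have hW3 : ∀ v : V, v ∉ U₁ → v ∉ U₂ → v ∉ U₃ → v ∉ U₁ ∪ U₂ ∪ U₃ := by
    intro v h1 h2 h3'
    simp [Finset.mem_union, h1, h2, h3']
  have havoid0 : ∀ v, P v = 0 → ∀ e ∈ H, v ∈ e → ∀ t ∈ e, t ≠ v → t ∉ U₁ := by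
    intro v hPv e he hv t ht htv htU
    by_cases h1 : v ∈ U₁
    · exact indep_pair hi1 he ht hv htv htU h1
    by_cases h2 : v ∈ U₂
    · rw [hP2 v h1 h2] at hPv; exact absurd hPv (by decide)
    by_cases h3' : v ∈ U₃
    · rw [hP3 v h1 h2 h3'] at hPv; exact absurd hPv (by decide)
    by_cases h4 : Sees U₁ v
    · by_cases h5 : Sees U₂ v
      · rw [hP6 v h1 h2 h3' h4 h5] at hPv; exact absurd hPv (by decide)
      · rw [hP5 v h1 h2 h3' h4 h5] at hPv; exact absurd hPv (by decide)
    · exact h4 ⟨e, he, hv, t, htU, ht⟩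
  have havoid1 : ∀ v, P v = 1 → ∀ e ∈ H, v ∈ e → ∀ t ∈ e, t ≠ v → t ∉ U₂ := by
    intro v hPv e he hv t ht htv htU
    by_cases h1 : v ∈ U₁
    · rw [hP1 v h1] at hPv; exact absurd hPv (by decide)
    by_cases h2 : v ∈ U₂
    · exact indep_pair hi2 he ht hv htv htU h2
    by_cases h3' : v ∈ U₃
    · rw [hP3 v h1 h2 h3'] at hPv; exact absurd hPv (by decide)
    by_cases h4 : Sees U₁ v
    · by_cases h5 : Sees U₂ v
      · rw [hP6 v h1 h2 h3' h4 h5] at hPv; exact absurd hPv (by decide)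
      · exact h5 ⟨e, he, hv, t, htU, ht⟩
    · rw [hP4 v h1 h2 h3' h4] at hPv; exact absurd hPv (by decide)
  have havoid2 : ∀ v, P v = 2 → ∀ e ∈ H, v ∈ e → ∀ t ∈ e, t ≠ v → t ∉ U₃ := by
    intro v hPv e he hv t ht htv htU
    by_cases h1 : v ∈ U₁
    · rw [hP1 v h1] at hPv; exact absurd hPv (by decide)
    by_cases h2 : v ∈ U₂
    · rw [hP2 v h1 h2] at hPv; exact absurd hPv (by decide)
    by_cases h3' : v ∈ U₃
    · exact indep_pair hi3 he ht hv htv htU h3'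
    by_cases h4 : Sees U₁ v
    · by_cases h5 : Sees U₂ v
      · exact mainClaim v (hW3 v h1 h2 h3') h4 h5 ⟨e, he, hv, t, htU, ht⟩
      · rw [hP5 v h1 h2 h3' h4 h5] at hPv; exact absurd hPv (by decide)
    · rw [hP4 v h1 h2 h3' h4] at hPv; exact absurd hPv (by decide)
  -- conclude
  refine ⟨P, ?_⟩
  intro e he u hu v hv huv hPeq
  have htr : ∀ i : Fin 3, i = 0 ∨ i = 1 ∨ i = 2 := by decide
  rcases htr (P u) with h | h | h
  · exact conflict_lemma h3 hK hF5 β γ δ n hV hδH hβ hγ hδ2' U₁ hA1 u v huv e he hu hv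
      (havoid0 u h) (havoid0 v (hPeq ▸ h))
  · exact conflict_lemma h3 hK hF5 β γ δ n hV hδH hβ hγ hδ2' U₂ hA2 u v huv e he hu hv
      (havoid1 u h) (havoid1 v (hPeq ▸ h))
  · exact conflict_lemma h3 hK hF5 β γ δ n hV hδH hβ hγ hδ2' U₃ hA3 u v huv e he hu hv
      (havoid2 u h) (havoid2 v (hPeq ▸ h))
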